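/- Let V be an n-graded vector space over a field 𝕂 of characteristic 0. For all homogeneous K₁ ∈ M^{(k₁,κ₁)}(V) and K₂ ∈ M^{(k₂,κ₂)}(V) one has j([K₁,K₂]^Δ) = j(K₁)∘j(K₂) − (−1)^{k₁k₂+⟨κ₁,κ₂⟩} j(K₂)∘j(K₁) as endomorphisms of M(V), i.e. j([K₁,K₂]^Δ) equals the (n+1)-graded commutator [j(K₁), j(K₂)] in End(M(V)). -/

import Mathlib

namespace NR

open Finset

/-- The sign `(-1)^z` for an integer `z`. -/
def sgn (z : ℤ) : ℤ := (-1) ^ z.natAbs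

/-- The inner product `⟨x,y⟩ = ∑ i, xⁱ yⁱ` of multidegrees `x, y ∈ ℤⁿ`. -/
def pairZ (n : ℕ) (x y : Fin n → ℤ) : ℤ := ∑ i, x i * y i

/-- The inner product of `(n+1)`-degrees in `ℤ × ℤⁿ`. -/
def prE (n : ℕ) (g h : ℤ × (Fin n → ℤ)) : ℤ := g.1 * h.1 + pairZ n g.2 h.2

/-- Shift a sequence: `shiftSeq f i = (f i, f (i+1), …)`. -/
def shiftSeq {β : Type*} (f : ℕ → β) (i : ℕ) : ℕ → β := fun m => f (m + i)

/-- Insert the value `c` at slot `i` of the sequence `f`, where `c` replaces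
`a` consecutive entries of `f` (the entries `f i, …, f (i+a-1)`). -/
def insSeq {β : Type*} (a i : ℕ) (c : β) (f : ℕ → β) : ℕ → β :=
  fun l => if l < i then f l else if l = i then c else f (l + a - 1)

/-- Permute the first `a` entries of a sequence by `σ`. -/
def permSeq {β : Type*} (a : ℕ) (σ : Equiv.Perm (Fin a)) (f : ℕ → β) : ℕ → β :=
  fun l => if h : l < a then f ((σ ⟨l, h⟩ : Fin a) : ℕ) else f l

/-- The multigraded sign `sign(σ, x)` of a permutation `σ` of `a` symbols with respect to
the multidegrees `x 0, …, x (a-1)`; it is the ordinary sign times the Koszul sign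
collected over the inversions of `σ`. -/
def gsign {G : Type*} (pr : G → G → ℤ) (a : ℕ) (σ : Equiv.Perm (Fin a)) (x : ℕ → G) : ℤ :=
  ((Equiv.Perm.sign σ : ℤˣ) : ℤ) *
    (-1) ^ (∑ p ∈ Finset.univ.filter
        (fun p : Fin a × Fin a => p.1 < p.2 ∧ σ p.2 < σ p.1),
        pr (x ((σ p.1 : Fin a) : ℕ)) (x ((σ p.2 : Fin a) : ℕ))).natAbs

section Ops

variable {G U : Type*} [AddCommGroup G] [AddCommGroup U]

/-- The operation `j(K₁)K₂` of the multigraded Nijenhuis–Richardson calculus.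
`K₁` represents an element of `M^{(k₁,κ₁)}(U)` of arity `a₁ = k₁+1` and `K₂` one of
`M^{(k₂,κ₂)}(U)` of arity `a₂ = k₂+1`; an element of arity `a` is coded as a function
taking the sequence of multidegrees of the (homogeneous) arguments and the sequence of
arguments, and depending only on the first `a` of them. -/
def jop (pr : G → G → ℤ) (a₁ : ℕ) (κ₁ : G) (a₂ : ℕ) (κ₂ : G)
    (K₁ K₂ : (ℕ → G) → (ℕ → U) → U) : (ℕ → G) → (ℕ → U) → U :=
  fun x X => ∑ i ∈ Finset.range a₂,
    sgn (((a₁ : ℤ) - 1) * (i : ℤ) + pr κ₁ (κ₂ + ∑ l ∈ Finset.range i, x l)) •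
      K₂ (insSeq a₁ i ((∑ m ∈ Finset.range a₁, x (m + i)) + κ₁) x)
         (insSeq a₁ i (K₁ (shiftSeq x i) (shiftSeq X i)) X)

/-- The multigraded bracket `[K₁,K₂]^Δ = j(K₁)K₂ - (-1)^{k₁k₂+⟨κ₁,κ₂⟩} j(K₂)K₁`. -/
def brD (pr : G → G → ℤ) (a₁ : ℕ) (κ₁ : G) (a₂ : ℕ) (κ₂ : G)
    (K₁ K₂ : (ℕ → G) → (ℕ → U) → U) : (ℕ → G) → (ℕ → U) → U :=
  fun x X => jop pr a₁ κ₁ a₂ κ₂ K₁ K₂ x X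
    - sgn (((a₁ : ℤ) - 1) * ((a₂ : ℤ) - 1) + pr κ₁ κ₂) • jop pr a₂ κ₂ a₁ κ₁ K₂ K₁ x X

end Ops

/-- `K` represents a (`a`-linear) element of `M(U)`: it does not depend on the degree
sequence, depends only on the first `a` arguments, and is `𝕂`-multilinear in them. -/
def IsML (𝕂 : Type*) [Field 𝕂] {G U U' : Type*} [AddCommGroup U] [Module 𝕂 U]
    [AddCommGroup U'] [Module 𝕂 U'] (a : ℕ) (K : (ℕ → G) → (ℕ → U) → U') : Prop :=
  (∀ x x' X, K x X = K x' X) ∧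
  (∀ x X X', (∀ i, i < a → X i = X' i) → K x X = K x X') ∧
  (∀ x X i, i < a →
    (∀ u v : U, K x (Function.update X i (u + v))
        = K x (Function.update X i u) + K x (Function.update X i v)) ∧
    (∀ (r : 𝕂) (u : U), K x (Function.update X i (r • u)) = r • K x (Function.update X i u)))

/-- `K ∈ M^{(a-1,κ)}(U)`: an `a`-linear map mapping `U^{x₀} × ⋯ × U^{x_{a-1}}` into
`U^{x₀+⋯+x_{a-1}+κ}`. -/
def MDeg (𝕂 : Type*) [Field 𝕂] {G U : Type*} [AddCommGroup G] [AddCommGroup U] [Module 𝕂 U]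
    (gr : G → Submodule 𝕂 U) (a : ℕ) (κ : G) (K : (ℕ → G) → (ℕ → U) → U) : Prop :=
  IsML 𝕂 a K ∧
  ∀ x X, (∀ i, X i ∈ gr (x i)) → K x X ∈ gr ((∑ i ∈ Finset.range a, x i) + κ)

/-- The multigraded alternator `α` on elements of arity `a`. -/
def alt (𝕂 : Type*) [Field 𝕂] {G U U' : Type*} [AddCommGroup U'] [Module 𝕂 U']
    (pr : G → G → ℤ) (a : ℕ) (K : (ℕ → G) → (ℕ → U) → U') : (ℕ → G) → (ℕ → U) → U' :=
  fun x X => (a.factorial : 𝕂)⁻¹ •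
    ∑ σ : Equiv.Perm (Fin a),
      ((gsign pr a σ x : ℤ) : 𝕂) • K (permSeq a σ x) (permSeq a σ X)

/-- The operation `i(K₁)K₂ = ((k₁+k₂+1)!/((k₁+1)!(k₂+1)!)) α(j(K₁)K₂)`. -/
def iop (𝕂 : Type*) [Field 𝕂] {G U : Type*} [AddCommGroup G] [AddCommGroup U] [Module 𝕂 U]
    (pr : G → G → ℤ) (a₁ : ℕ) (κ₁ : G) (a₂ : ℕ) (κ₂ : G)
    (K₁ K₂ : (ℕ → G) → (ℕ → U) → U) : (ℕ → G) → (ℕ → U) → U :=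
  fun x X =>
    (((a₁ + a₂ - 1).factorial : 𝕂) / ((a₁.factorial : 𝕂) * (a₂.factorial : 𝕂))) •
      alt 𝕂 pr (a₁ + a₂ - 1) (jop pr a₁ κ₁ a₂ κ₂ K₁ K₂) x X

/-- The multigraded Nijenhuis–Richardson bracket
`[K₁,K₂]^∧ = i(K₁)K₂ - (-1)^{k₁k₂+⟨κ₁,κ₂⟩} i(K₂)K₁`. -/
def brW (𝕂 : Type*) [Field 𝕂] {G U : Type*} [AddCommGroup G] [AddCommGroup U] [Module 𝕂 U]
    (pr : G → G → ℤ) (a₁ : ℕ) (κ₁ : G) (a₂ : ℕ) (κ₂ : G)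
    (K₁ K₂ : (ℕ → G) → (ℕ → U) → U) : (ℕ → G) → (ℕ → U) → U :=
  fun x X => iop 𝕂 pr a₁ κ₁ a₂ κ₂ K₁ K₂ x X
    - sgn (((a₁ : ℤ) - 1) * ((a₂ : ℤ) - 1) + pr κ₁ κ₂) • iop 𝕂 pr a₂ κ₂ a₁ κ₁ K₂ K₁ x X

/-- `K ∈ A^{(a-1,κ)}(U) = α(M^{(a-1,κ)}(U))`, i.e. `K ∈ M^{(a-1,κ)}(U)` and `K` is fixed by
the multigraded alternator (on homogeneous arguments). -/
def ADeg (𝕂 : Type*) [Field 𝕂] {G U : Type*} [AddCommGroup G] [AddCommGroup U] [Module 𝕂 U]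
    (pr : G → G → ℤ) (gr : G → Submodule 𝕂 U) (a : ℕ) (κ : G)
    (K : (ℕ → G) → (ℕ → U) → U) : Prop :=
  MDeg 𝕂 gr a κ K ∧
  ∀ x X, (∀ i, X i ∈ gr (x i)) → alt 𝕂 pr a K x X = K x X

/-- The bilinear map `P` coded as an element of arity `2`. -/
def KofBil {𝕂 : Type*} [Field 𝕂] {G U : Type*} [AddCommGroup U] [Module 𝕂 U]
    (P : U →ₗ[𝕂] U →ₗ[𝕂] U) : (ℕ → G) → (ℕ → U) → U :=
  fun _ X => P (X 0) (X 1)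


/-! ### Auxiliary lemmas for Statement 5 -/

section Stmt5Aux

open Finset

lemma sgn_eq (z : ℤ) : sgn z = if Even z then 1 else -1 := by
  unfold sgn
  rcases Int.even_or_odd z with h | h
  · rw [if_pos h, Even.neg_one_pow (Int.natAbs_even.mpr h)]
  · rw [if_neg (Int.not_even_iff_odd.mpr h), Odd.neg_one_pow (Int.natAbs_odd.mpr h)]

lemma sgn_congr {a b : ℤ} (h : Even (a - b)) : sgn a = sgn b := by
  rw [Int.even_sub] at h
  by_cases hb : Even b
  · rw [sgn_eq, sgn_eq, if_pos hb, if_pos (h.mpr hb)]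
  · rw [sgn_eq, sgn_eq, if_neg hb, if_neg (fun hh => hb (h.mp hh))]

lemma sgn_add (a b : ℤ) : sgn (a + b) = sgn a * sgn b := by
  by_cases ha : Even a <;> by_cases hb : Even b <;>
    simp [sgn_eq, Int.even_add, ha, hb, iff_iff_implies_and_implies]

lemma sgn_smul_smul {M : Type*} [AddCommGroup M] (a b : ℤ) (v : M) :
    sgn a • sgn b • v = sgn (a + b) • v := by
  rw [smul_smul, ← sgn_add]

lemma sgn_smul_congr {M : Type*} [AddCommGroup M] {a b : ℤ} {v w : M}
    (h : Even (a - b)) (hv : v = w) : sgn a • v = sgn b • w := by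
  rw [sgn_congr h, hv]

lemma pairZ_add_right (n : ℕ) (x y z : Fin n → ℤ) :
    pairZ n x (y + z) = pairZ n x y + pairZ n x z := by
  simp [pairZ, mul_add, Finset.sum_add_distrib]

lemma pairZ_sub_right (n : ℕ) (x y z : Fin n → ℤ) :
    pairZ n x (y - z) = pairZ n x y - pairZ n x z := by
  simp [pairZ, mul_sub, Finset.sum_sub_distrib]

lemma pairZ_add_left (n : ℕ) (x y z : Fin n → ℤ) :
    pairZ n (x + y) z = pairZ n x z + pairZ n y z := by
  simp [pairZ, add_mul, Finset.sum_add_distrib]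

lemma pairZ_comm (n : ℕ) (x y : Fin n → ℤ) : pairZ n x y = pairZ n y x := by
  simp [pairZ, mul_comm]

section SeqSums
variable {G : Type*} [AddCommGroup G]

lemma sum_shiftSeq (x : ℕ → G) (i j : ℕ) :
    ∑ l ∈ range j, shiftSeq x i l = (∑ l ∈ range (i + j), x l) - ∑ l ∈ range i, x l := by
  induction j with
  | zero => simp
  | succ j ih =>
      rw [Finset.sum_range_succ, ih, show i + (j+1) = (i+j)+1 by omega, Finset.sum_range_succ]
      simp [shiftSeq, add_comm]
      abel

lemma sum_insSeq_le {p q : ℕ} (h : q ≤ p) (a : ℕ) (c : G) (x : ℕ → G) :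
    ∑ l ∈ range q, insSeq a p c x l = ∑ l ∈ range q, x l := by
  refine Finset.sum_congr rfl fun l hl => ?_
  have : l < q := Finset.mem_range.mp hl
  simp [insSeq, show l < p by omega]

lemma sum_insSeq_gt {p q : ℕ} (h : p < q) (a : ℕ) (κ : G) (x : ℕ → G) :
    ∑ l ∈ range q, insSeq a p ((∑ m ∈ range a, x (m + p)) + κ) x l
      = (∑ l ∈ range (q + a - 1), x l) + κ := by
  induction q with
  | zero => omega
  | succ q ih =>
      rcases Nat.lt_or_ge p q with hq | hq
      · rw [Finset.sum_range_succ, ih hq]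
        have h1 : q + 1 + a - 1 = (q + a - 1) + 1 := by omega
        rw [h1, Finset.sum_range_succ]
        have h2 : insSeq a p ((∑ m ∈ range a, x (m + p)) + κ) x q = x (q + a - 1) := by
          simp [insSeq, show ¬ q < p by omega, show q ≠ p by omega]
        rw [h2]; abel
      · have hpq : p = q := by omega
        subst hpq
        rw [Finset.sum_range_succ, sum_insSeq_le (le_refl p)]
        have h2 : insSeq a p ((∑ m ∈ range a, x (m + p)) + κ) x p
            = (∑ m ∈ range a, x (m + p)) + κ := by
          simp [insSeq]
        rw [h2, show p + 1 + a - 1 = p + a by omega, ← add_assoc]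
        congr 1
        rw [Finset.sum_range_add]
        congr 1
        exact Finset.sum_congr rfl fun m _ => by rw [add_comm]

end SeqSums

section MLHelpers

lemma update_insSeq {β : Type*} (b i : ℕ) (c d : β) (X : ℕ → β) :
    Function.update (insSeq b i c X) i d = insSeq b i d X := by
  funext l
  rcases eq_or_ne l i with rfl | h
  · simp [insSeq]
  · simp [Function.update, h, insSeq]

variable {𝕂 : Type*} [Field 𝕂] {G U U' : Type*} [AddCommGroup U] [Module 𝕂 U]
  [AddCommGroup U'] [Module 𝕂 U'] {a : ℕ} {K : (ℕ → G) → (ℕ → U) → U'}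

lemma ml_congr (h : IsML 𝕂 a K) {x x' : ℕ → G} {Y Y' : ℕ → U}
    (hY : ∀ m, m < a → Y m = Y' m) : K x Y = K x' Y' := by
  rw [h.1 x x' Y]
  exact h.2.1 x' Y Y' hY

private def mlhom (h : IsML 𝕂 a K) {i : ℕ} (hi : i < a) (x : ℕ → G) (b : ℕ) (X : ℕ → U) :
    U →+ U' :=
  AddMonoidHom.mk' (fun v => K x (Function.update (insSeq b i 0 X) i v))
    (fun u v => (h.2.2 x (insSeq b i 0 X) i hi).1 u v)

lemma ml_ins_eq_hom (h : IsML 𝕂 a K) {i : ℕ} (hi : i < a) (x : ℕ → G) (b : ℕ) (X : ℕ → U)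
    (v : U) : K x (insSeq b i v X) = mlhom h hi x b X v := by
  show _ = K x (Function.update (insSeq b i 0 X) i v)
  rw [update_insSeq]

lemma ml_ins_sum (h : IsML 𝕂 a K) {i : ℕ} (hi : i < a) (x : ℕ → G) (b : ℕ) (X : ℕ → U)
    {ι : Type*} (s : Finset ι) (f : ι → U) :
    K x (insSeq b i (∑ j ∈ s, f j) X) = ∑ j ∈ s, K x (insSeq b i (f j) X) := by
  simp only [ml_ins_eq_hom h hi x b X, map_sum]

lemma ml_ins_zsmul (h : IsML 𝕂 a K) {i : ℕ} (hi : i < a) (x : ℕ → G) (b : ℕ) (X : ℕ → U)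
    (c : ℤ) (v : U) :
    K x (insSeq b i (c • v) X) = c • K x (insSeq b i v X) := by
  simp only [ml_ins_eq_hom h hi x b X, map_zsmul]

lemma ml_ins_sub (h : IsML 𝕂 a K) {i : ℕ} (hi : i < a) (x : ℕ → G) (b : ℕ) (X : ℕ → U)
    (u v : U) :
    K x (insSeq b i (u - v) X) = K x (insSeq b i u X) - K x (insSeq b i v X) := by
  simp only [ml_ins_eq_hom h hi x b X, map_sub]

end MLHelpers

section Splits
variable {M : Type*} [AddCommGroup M]

lemma split3 (s : Finset (ℕ × ℕ)) (a : ℕ) (F : ℕ × ℕ → M) :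
    ∑ t ∈ s, F t
      = (∑ t ∈ s.filter (fun t => t.2 ≤ t.1 ∧ t.1 < t.2 + a), F t)
        + (∑ t ∈ s.filter (fun t => t.1 < t.2), F t)
        + (∑ t ∈ s.filter (fun t => t.2 + a ≤ t.1), F t) := by
  classical
  have hP := Finset.sum_filter_add_sum_filter_not s (fun t => t.2 ≤ t.1 ∧ t.1 < t.2 + a) F
  have hQ := Finset.sum_filter_add_sum_filter_not
    (s.filter (fun t => ¬(t.2 ≤ t.1 ∧ t.1 < t.2 + a))) (fun t => t.1 < t.2) F
  rw [Finset.filter_filter, Finset.filter_filter] at hQ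
  have e1 : s.filter (fun t => ¬(t.2 ≤ t.1 ∧ t.1 < t.2 + a) ∧ t.1 < t.2)
      = s.filter (fun t => t.1 < t.2) := by
    apply Finset.filter_congr
    intro t _
    constructor
    · exact fun h => h.2
    · intro h; exact ⟨by omega, h⟩
  have e2 : s.filter (fun t => ¬(t.2 ≤ t.1 ∧ t.1 < t.2 + a) ∧ ¬ t.1 < t.2)
      = s.filter (fun t => t.2 + a ≤ t.1) := by
    apply Finset.filter_congr
    intro t _
    constructor
    · intro h; omega
    · intro h; omega
  rw [e1, e2] at hQ
  rw [← hP, ← hQ]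
  abel

lemma main_split (a₁ a₂ a₃ : ℕ) (F1 F2 G1 G2 : ℕ × ℕ → M)
    (h1 : ∑ t ∈ (range (a₂ + a₃ - 1) ×ˢ range a₃).filter
            (fun t => t.2 ≤ t.1 ∧ t.1 < t.2 + a₂), F1 t
          = ∑ t ∈ range a₃ ×ˢ range a₂, G1 t)
    (h2 : ∑ t ∈ (range (a₁ + a₃ - 1) ×ˢ range a₃).filter
            (fun t => t.2 ≤ t.1 ∧ t.1 < t.2 + a₁), F2 t
          = ∑ t ∈ range a₃ ×ˢ range a₁, G2 t)
    (h3 : ∑ t ∈ (range (a₂ + a₃ - 1) ×ˢ range a₃).filter (fun t => t.1 < t.2), F1 t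
          = ∑ t ∈ (range (a₁ + a₃ - 1) ×ˢ range a₃).filter (fun t => t.2 + a₁ ≤ t.1), F2 t)
    (h4 : ∑ t ∈ (range (a₂ + a₃ - 1) ×ˢ range a₃).filter (fun t => t.2 + a₂ ≤ t.1), F1 t
          = ∑ t ∈ (range (a₁ + a₃ - 1) ×ˢ range a₃).filter (fun t => t.1 < t.2), F2 t) :
    (∑ t ∈ range a₃ ×ˢ range a₂, G1 t) - (∑ t ∈ range a₃ ×ˢ range a₁, G2 t)
      = (∑ t ∈ range (a₂ + a₃ - 1) ×ˢ range a₃, F1 t)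
        - (∑ t ∈ range (a₁ + a₃ - 1) ×ˢ range a₃, F2 t) := by
  rw [split3 _ a₂ F1, split3 _ a₁ F2, h3, h4, h1, h2]
  abel

end Splits

section Expand

lemma jop_jop {G U : Type*} [AddCommGroup G] [AddCommGroup U]
    (pr : G → G → ℤ) (a₁ a₂ a₃ : ℕ) (κ₁ κ₂ κ₃ : G)
    (K₁ K₂ K₃ : (ℕ → G) → (ℕ → U) → U) (x : ℕ → G) (X : ℕ → U) :
    jop pr a₁ κ₁ (a₂ + a₃ - 1) (κ₂ + κ₃) K₁ (jop pr a₂ κ₂ a₃ κ₃ K₂ K₃) x X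
      = ∑ t ∈ range (a₂ + a₃ - 1) ×ˢ range a₃,
          sgn ((((a₁ : ℤ) - 1) * t.1 + pr κ₁ (κ₂ + κ₃ + ∑ l ∈ range t.1, x l))
            + (((a₂ : ℤ) - 1) * t.2 + pr κ₂ (κ₃ + ∑ l ∈ range t.2,
                insSeq a₁ t.1 ((∑ m ∈ range a₁, x (m + t.1)) + κ₁) x l)))
          • K₃ (insSeq a₂ t.2 ((∑ m ∈ range a₂,
                  insSeq a₁ t.1 ((∑ m' ∈ range a₁, x (m' + t.1)) + κ₁) x (m + t.2)) + κ₂)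
                (insSeq a₁ t.1 ((∑ m ∈ range a₁, x (m + t.1)) + κ₁) x))
              (insSeq a₂ t.2
                (K₂ (shiftSeq (insSeq a₁ t.1 ((∑ m ∈ range a₁, x (m + t.1)) + κ₁) x) t.2)
                    (shiftSeq (insSeq a₁ t.1 (K₁ (shiftSeq x t.1) (shiftSeq X t.1)) X) t.2))
                (insSeq a₁ t.1 (K₁ (shiftSeq x t.1) (shiftSeq X t.1)) X)) := by
  simp only [jop, Finset.smul_sum, sgn_smul_smul]
  rw [← Finset.sum_product']

lemma jop_brD {𝕂 : Type*} [Field 𝕂] {G U : Type*} [AddCommGroup G] [AddCommGroup U]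
    [Module 𝕂 U]
    (pr : G → G → ℤ) (a₁ a₂ a₃ : ℕ) (κ₁ κ₂ κ₃ : G)
    (K₁ K₂ K₃ : (ℕ → G) → (ℕ → U) → U) (h₃ : IsML 𝕂 a₃ K₃) (x : ℕ → G) (X : ℕ → U) :
    jop pr (a₁ + a₂ - 1) (κ₁ + κ₂) a₃ κ₃ (brD pr a₁ κ₁ a₂ κ₂ K₁ K₂) K₃ x X
      = (∑ t ∈ range a₃ ×ˢ range a₂,
          sgn (((((a₁ + a₂ - 1 : ℕ) : ℤ) - 1) * t.1 + pr (κ₁ + κ₂) (κ₃ + ∑ l ∈ range t.1, x l))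
            + (((a₁ : ℤ) - 1) * t.2 + pr κ₁ (κ₂ + ∑ l ∈ range t.2, shiftSeq x t.1 l)))
          • K₃ (insSeq (a₁ + a₂ - 1) t.1
                  ((∑ m ∈ range (a₁ + a₂ - 1), x (m + t.1)) + (κ₁ + κ₂)) x)
              (insSeq (a₁ + a₂ - 1) t.1
                (K₂ (insSeq a₁ t.2 ((∑ m ∈ range a₁, shiftSeq x t.1 (m + t.2)) + κ₁)
                      (shiftSeq x t.1))
                    (insSeq a₁ t.2
                      (K₁ (shiftSeq (shiftSeq x t.1) t.2) (shiftSeq (shiftSeq X t.1) t.2))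
                      (shiftSeq X t.1)))
                X))
        - ∑ t ∈ range a₃ ×ˢ range a₁,
          sgn (((((a₁ + a₂ - 1 : ℕ) : ℤ) - 1) * t.1 + pr (κ₁ + κ₂) (κ₃ + ∑ l ∈ range t.1, x l))
            + ((((a₁ : ℤ) - 1) * ((a₂ : ℤ) - 1) + pr κ₁ κ₂)
              + (((a₂ : ℤ) - 1) * t.2 + pr κ₂ (κ₁ + ∑ l ∈ range t.2, shiftSeq x t.1 l))))
          • K₃ (insSeq (a₁ + a₂ - 1) t.1
                  ((∑ m ∈ range (a₁ + a₂ - 1), x (m + t.1)) + (κ₁ + κ₂)) x)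
              (insSeq (a₁ + a₂ - 1) t.1
                (K₁ (insSeq a₂ t.2 ((∑ m ∈ range a₂, shiftSeq x t.1 (m + t.2)) + κ₂)
                      (shiftSeq x t.1))
                    (insSeq a₂ t.2
                      (K₂ (shiftSeq (shiftSeq x t.1) t.2) (shiftSeq (shiftSeq X t.1) t.2))
                      (shiftSeq X t.1)))
                X) := by
  rw [jop]
  calc
    ∑ i ∈ range a₃,
        sgn ((((a₁ + a₂ - 1 : ℕ) : ℤ) - 1) * i + pr (κ₁ + κ₂) (κ₃ + ∑ l ∈ range i, x l))
          • K₃ (insSeq (a₁ + a₂ - 1) i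
                  ((∑ m ∈ range (a₁ + a₂ - 1), x (m + i)) + (κ₁ + κ₂)) x)
              (insSeq (a₁ + a₂ - 1) i
                (brD pr a₁ κ₁ a₂ κ₂ K₁ K₂ (shiftSeq x i) (shiftSeq X i)) X)
      = ∑ i ∈ range a₃,
          ((∑ j ∈ range a₂,
            sgn (((((a₁ + a₂ - 1 : ℕ) : ℤ) - 1) * i + pr (κ₁ + κ₂) (κ₃ + ∑ l ∈ range i, x l))
              + (((a₁ : ℤ) - 1) * j + pr κ₁ (κ₂ + ∑ l ∈ range j, shiftSeq x i l)))
            • K₃ (insSeq (a₁ + a₂ - 1) i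
                    ((∑ m ∈ range (a₁ + a₂ - 1), x (m + i)) + (κ₁ + κ₂)) x)
                (insSeq (a₁ + a₂ - 1) i
                  (K₂ (insSeq a₁ j ((∑ m ∈ range a₁, shiftSeq x i (m + j)) + κ₁)
                        (shiftSeq x i))
                      (insSeq a₁ j
                        (K₁ (shiftSeq (shiftSeq x i) j) (shiftSeq (shiftSeq X i) j))
                        (shiftSeq X i)))
                  X))
          - ∑ j ∈ range a₁,
            sgn (((((a₁ + a₂ - 1 : ℕ) : ℤ) - 1) * i + pr (κ₁ + κ₂) (κ₃ + ∑ l ∈ range i, x l))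
              + ((((a₁ : ℤ) - 1) * ((a₂ : ℤ) - 1) + pr κ₁ κ₂)
                + (((a₂ : ℤ) - 1) * j + pr κ₂ (κ₁ + ∑ l ∈ range j, shiftSeq x i l))))
            • K₃ (insSeq (a₁ + a₂ - 1) i
                    ((∑ m ∈ range (a₁ + a₂ - 1), x (m + i)) + (κ₁ + κ₂)) x)
                (insSeq (a₁ + a₂ - 1) i
                  (K₁ (insSeq a₂ j ((∑ m ∈ range a₂, shiftSeq x i (m + j)) + κ₂)
                        (shiftSeq x i))
                      (insSeq a₂ j
                        (K₂ (shiftSeq (shiftSeq x i) j) (shiftSeq (shiftSeq X i) j))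
                        (shiftSeq X i)))
                  X)) := by
        refine Finset.sum_congr rfl fun i hi => ?_
        have hi' : i < a₃ := Finset.mem_range.mp hi
        simp only [brD, jop]
        simp only [ml_ins_sub h₃ hi', ml_ins_zsmul h₃ hi', ml_ins_sum h₃ hi']
        simp only [smul_sub, Finset.smul_sum, sgn_smul_smul]
    _ = _ := by
        rw [Finset.sum_sub_distrib, ← Finset.sum_product', ← Finset.sum_product']

end Expand

end Stmt5Aux


set_option maxHeartbeats 1600000 in
/-- For homogeneous `K₁ ∈ M^{(k₁,κ₁)}(V)` and `K₂ ∈ M^{(k₂,κ₂)}(V)` one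
has `j([K₁,K₂]^Δ) = j(K₁)∘j(K₂) − (−1)^{k₁k₂+⟨κ₁,κ₂⟩} j(K₂)∘j(K₁)` as endomorphisms of
`M(V)`, i.e. both sides agree on every homogeneous `K₃ ∈ M^{(k₃,κ₃)}(V)`, evaluated on
homogeneous arguments.  (Arities: `aᵢ = kᵢ + 1`.) -/
theorem stmt5 {𝕂 : Type} [Field 𝕂] [CharZero 𝕂] (n : ℕ)
    {V : Type} [AddCommGroup V] [Module 𝕂 V]
    (gr : (Fin n → ℤ) → Submodule 𝕂 V) (hgr : DirectSum.IsInternal gr)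
    (a₁ a₂ a₃ : ℕ) (κ₁ κ₂ κ₃ : Fin n → ℤ)
    (K₁ K₂ K₃ : (ℕ → (Fin n → ℤ)) → (ℕ → V) → V)
    (h₁ : MDeg 𝕂 gr a₁ κ₁ K₁) (h₂ : MDeg 𝕂 gr a₂ κ₂ K₂) (h₃ : MDeg 𝕂 gr a₃ κ₃ K₃) :
    ∀ x X, (∀ i, X i ∈ gr (x i)) →
      jop (pairZ n) (a₁ + a₂ - 1) (κ₁ + κ₂) a₃ κ₃
          (brD (pairZ n) a₁ κ₁ a₂ κ₂ K₁ K₂) K₃ x X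
        = jop (pairZ n) a₁ κ₁ (a₂ + a₃ - 1) (κ₂ + κ₃) K₁
            (jop (pairZ n) a₂ κ₂ a₃ κ₃ K₂ K₃) x X
          - sgn (((a₁ : ℤ) - 1) * ((a₂ : ℤ) - 1) + pairZ n κ₁ κ₂) •
            jop (pairZ n) a₂ κ₂ (a₁ + a₃ - 1) (κ₁ + κ₃) K₂
              (jop (pairZ n) a₁ κ₁ a₃ κ₃ K₁ K₃) x X := by
  intro x X _
  have h1m := h₁.1
  have h2m := h₂.1
  have h3m := h₃.1
  rw [jop_brD (pairZ n) a₁ a₂ a₃ κ₁ κ₂ κ₃ K₁ K₂ K₃ h3m x X,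
      jop_jop (pairZ n) a₁ a₂ a₃ κ₁ κ₂ κ₃ K₁ K₂ K₃ x X,
      jop_jop (pairZ n) a₂ a₁ a₃ κ₂ κ₁ κ₃ K₂ K₁ K₃ x X,
      Finset.smul_sum]
  simp only [sgn_smul_smul]
  refine main_split a₁ a₂ a₃ _ _ _ _ ?_ ?_ ?_ ?_
  · -- nested terms of j(K₁)(j(K₂)K₃) ↔ j(j(K₁)K₂)K₃ part
    refine Finset.sum_nbij' (fun t => (t.2, t.1 - t.2)) (fun s => (s.1 + s.2, s.1))
      ?_ ?_ ?_ ?_ ?_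
    · intro t ht
      obtain ⟨p, q⟩ := t
      simp only [Finset.mem_filter, Finset.mem_product, Finset.mem_range] at ht ⊢
      omega
    · intro s hs
      obtain ⟨p, q⟩ := s
      simp only [Finset.mem_filter, Finset.mem_product, Finset.mem_range] at hs ⊢
      omega
    · intro t ht
      obtain ⟨p, q⟩ := t
      simp only [Finset.mem_filter, Finset.mem_product, Finset.mem_range] at ht
      simp only [Prod.ext_iff, true_and, and_true]
      omega
    · intro s hs
      obtain ⟨p, q⟩ := s
      simp only [Finset.mem_filter, Finset.mem_product, Finset.mem_range] at hs
      simp only [Prod.ext_iff, true_and, and_true]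
      omega
    · intro t ht
      obtain ⟨p, q⟩ := t
      simp only [Finset.mem_filter, Finset.mem_product, Finset.mem_range] at ht
      obtain ⟨⟨hp, hq⟩, hqp, hpa⟩ := ht
      dsimp only
      refine sgn_smul_congr ?_ ?_
      · rw [sum_insSeq_le hqp, sum_shiftSeq x q (p - q), show q + (p - q) = p by omega]
        simp only [pairZ_add_right, pairZ_add_left, pairZ_sub_right]
        rw [show ((a₁ + a₂ - 1 : ℕ) : ℤ) = (a₁ : ℤ) + (a₂ : ℤ) - 1 by omega,
            show ((p - q : ℕ) : ℤ) = (p : ℤ) - (q : ℤ) by omega]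
        exact ⟨0, by ring⟩
      · refine ml_congr h3m fun l hl => ?_
        simp only [insSeq, shiftSeq]
        split_ifs <;>
          first
          | rfl
          | (exfalso; omega)
          | (congr 1 <;> omega)
          | (refine ml_congr h2m fun m hm => ?_; (try simp only [insSeq, shiftSeq]); first | (split_ifs <;> (first | rfl | (exfalso; omega) | (congr 1 <;> omega) | (refine ml_congr h1m fun r hr => ?_; (try simp only [insSeq, shiftSeq]); first | (split_ifs <;> (first | rfl | (exfalso; omega) | (congr 1 <;> omega))) | rfl | (exfalso; omega) | (congr 1 <;> omega)))) | rfl | (exfalso; omega) | (congr 1 <;> omega) | (refine ml_congr h1m fun r hr => ?_; (try simp only [insSeq, shiftSeq]); first | (split_ifs <;> (first | rfl | (exfalso; omega) | (congr 1 <;> omega))) | rfl | (exfalso; omega) | (congr 1 <;> omega)))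
          | (refine ml_congr h1m fun m hm => ?_; (try simp only [insSeq, shiftSeq]); first | (split_ifs <;> (first | rfl | (exfalso; omega) | (congr 1 <;> omega) | (refine ml_congr h2m fun r hr => ?_; (try simp only [insSeq, shiftSeq]); first | (split_ifs <;> (first | rfl | (exfalso; omega) | (congr 1 <;> omega))) | rfl | (exfalso; omega) | (congr 1 <;> omega)))) | rfl | (exfalso; omega) | (congr 1 <;> omega) | (refine ml_congr h2m fun r hr => ?_; (try simp only [insSeq, shiftSeq]); first | (split_ifs <;> (first | rfl | (exfalso; omega) | (congr 1 <;> omega))) | rfl | (exfalso; omega) | (congr 1 <;> omega)))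
  · -- nested terms of j(K₂)(j(K₁)K₃) ↔ j(j(K₂)K₁)K₃ part
    refine Finset.sum_nbij' (fun t => (t.2, t.1 - t.2)) (fun s => (s.1 + s.2, s.1))
      ?_ ?_ ?_ ?_ ?_
    · intro t ht
      obtain ⟨p, q⟩ := t
      simp only [Finset.mem_filter, Finset.mem_product, Finset.mem_range] at ht ⊢
      omega
    · intro s hs
      obtain ⟨p, q⟩ := s
      simp only [Finset.mem_filter, Finset.mem_product, Finset.mem_range] at hs ⊢
      omega
    · intro t ht
      obtain ⟨p, q⟩ := t
      simp only [Finset.mem_filter, Finset.mem_product, Finset.mem_range] at ht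
      simp only [Prod.ext_iff, true_and, and_true]
      omega
    · intro s hs
      obtain ⟨p, q⟩ := s
      simp only [Finset.mem_filter, Finset.mem_product, Finset.mem_range] at hs
      simp only [Prod.ext_iff, true_and, and_true]
      omega
    · intro t ht
      obtain ⟨p, q⟩ := t
      simp only [Finset.mem_filter, Finset.mem_product, Finset.mem_range] at ht
      obtain ⟨⟨hp, hq⟩, hqp, hpa⟩ := ht
      dsimp only
      refine sgn_smul_congr ?_ ?_
      · rw [sum_insSeq_le hqp, sum_shiftSeq x q (p - q), show q + (p - q) = p by omega]
        simp only [pairZ_add_right, pairZ_add_left, pairZ_sub_right]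
        rw [show ((a₁ + a₂ - 1 : ℕ) : ℤ) = (a₁ : ℤ) + (a₂ : ℤ) - 1 by omega,
            show ((p - q : ℕ) : ℤ) = (p : ℤ) - (q : ℤ) by omega]
        exact ⟨0, by ring⟩
      · refine ml_congr h3m fun l hl => ?_
        simp only [insSeq, shiftSeq]
        split_ifs <;>
          first
          | rfl
          | (exfalso; omega)
          | (congr 1 <;> omega)
          | (refine ml_congr h1m fun m hm => ?_; (try simp only [insSeq, shiftSeq]); first | (split_ifs <;> (first | rfl | (exfalso; omega) | (congr 1 <;> omega) | (refine ml_congr h2m fun r hr => ?_; (try simp only [insSeq, shiftSeq]); first | (split_ifs <;> (first | rfl | (exfalso; omega) | (congr 1 <;> omega))) | rfl | (exfalso; omega) | (congr 1 <;> omega)))) | rfl | (exfalso; omega) | (congr 1 <;> omega) | (refine ml_congr h2m fun r hr => ?_; (try simp only [insSeq, shiftSeq]); first | (split_ifs <;> (first | rfl | (exfalso; omega) | (congr 1 <;> omega))) | rfl | (exfalso; omega) | (congr 1 <;> omega)))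
          | (refine ml_congr h2m fun m hm => ?_; (try simp only [insSeq, shiftSeq]); first | (split_ifs <;> (first | rfl | (exfalso; omega) | (congr 1 <;> omega) | (refine ml_congr h1m fun r hr => ?_; (try simp only [insSeq, shiftSeq]); first | (split_ifs <;> (first | rfl | (exfalso; omega) | (congr 1 <;> omega))) | rfl | (exfalso; omega) | (congr 1 <;> omega)))) | rfl | (exfalso; omega) | (congr 1 <;> omega) | (refine ml_congr h1m fun r hr => ?_; (try simp only [insSeq, shiftSeq]); first | (split_ifs <;> (first | rfl | (exfalso; omega) | (congr 1 <;> omega))) | rfl | (exfalso; omega) | (congr 1 <;> omega)))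
  · -- disjoint terms: K₁ inserted before K₂
    refine Finset.sum_nbij' (fun t => (t.2 + a₁ - 1, t.1)) (fun s => (s.2, s.1 - a₁ + 1))
      ?_ ?_ ?_ ?_ ?_
    · intro t ht
      obtain ⟨p, q⟩ := t
      simp only [Finset.mem_filter, Finset.mem_product, Finset.mem_range] at ht ⊢
      omega
    · intro s hs
      obtain ⟨p, q⟩ := s
      simp only [Finset.mem_filter, Finset.mem_product, Finset.mem_range] at hs ⊢
      omega
    · intro t ht
      obtain ⟨p, q⟩ := t
      simp only [Finset.mem_filter, Finset.mem_product, Finset.mem_range] at ht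
      simp only [Prod.ext_iff, true_and, and_true]
      omega
    · intro s hs
      obtain ⟨p, q⟩ := s
      simp only [Finset.mem_filter, Finset.mem_product, Finset.mem_range] at hs
      simp only [Prod.ext_iff, true_and, and_true]
      omega
    · intro t ht
      obtain ⟨p, q⟩ := t
      simp only [Finset.mem_filter, Finset.mem_product, Finset.mem_range] at ht
      obtain ⟨⟨hp, hq⟩, hpq⟩ := ht
      dsimp only
      refine sgn_smul_congr ?_ ?_
      · rw [sum_insSeq_gt hpq, sum_insSeq_le (show p ≤ q + a₁ - 1 by omega)]
        simp only [pairZ_add_right, pairZ_add_left]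
        rw [show ((q + a₁ - 1 : ℕ) : ℤ) = (q : ℤ) + (a₁ : ℤ) - 1 by omega]
        exact ⟨-(((a₁ : ℤ) - 1) * ((a₂ : ℤ) - 1)), by ring⟩
      · refine ml_congr h3m fun l hl => ?_
        simp only [insSeq, shiftSeq]
        split_ifs <;>
          first
          | rfl
          | (exfalso; omega)
          | (congr 1 <;> omega)
          | (refine ml_congr h2m fun m hm => ?_; (try simp only [insSeq, shiftSeq]); first | (split_ifs <;> (first | rfl | (exfalso; omega) | (congr 1 <;> omega) | (refine ml_congr h1m fun r hr => ?_; (try simp only [insSeq, shiftSeq]); first | (split_ifs <;> (first | rfl | (exfalso; omega) | (congr 1 <;> omega))) | rfl | (exfalso; omega) | (congr 1 <;> omega)))) | rfl | (exfalso; omega) | (congr 1 <;> omega) | (refine ml_congr h1m fun r hr => ?_; (try simp only [insSeq, shiftSeq]); first | (split_ifs <;> (first | rfl | (exfalso; omega) | (congr 1 <;> omega))) | rfl | (exfalso; omega) | (congr 1 <;> omega)))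
          | (refine ml_congr h1m fun m hm => ?_; (try simp only [insSeq, shiftSeq]); first | (split_ifs <;> (first | rfl | (exfalso; omega) | (congr 1 <;> omega) | (refine ml_congr h2m fun r hr => ?_; (try simp only [insSeq, shiftSeq]); first | (split_ifs <;> (first | rfl | (exfalso; omega) | (congr 1 <;> omega))) | rfl | (exfalso; omega) | (congr 1 <;> omega)))) | rfl | (exfalso; omega) | (congr 1 <;> omega) | (refine ml_congr h2m fun r hr => ?_; (try simp only [insSeq, shiftSeq]); first | (split_ifs <;> (first | rfl | (exfalso; omega) | (congr 1 <;> omega))) | rfl | (exfalso; omega) | (congr 1 <;> omega)))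
  · -- disjoint terms: K₂ inserted before K₁
    refine Finset.sum_nbij' (fun t => (t.2, t.1 - a₂ + 1)) (fun s => (s.2 + a₂ - 1, s.1))
      ?_ ?_ ?_ ?_ ?_
    · intro t ht
      obtain ⟨p, q⟩ := t
      simp only [Finset.mem_filter, Finset.mem_product, Finset.mem_range] at ht ⊢
      omega
    · intro s hs
      obtain ⟨p, q⟩ := s
      simp only [Finset.mem_filter, Finset.mem_product, Finset.mem_range] at hs ⊢
      omega
    · intro t ht
      obtain ⟨p, q⟩ := t
      simp only [Finset.mem_filter, Finset.mem_product, Finset.mem_range] at ht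
      simp only [Prod.ext_iff, true_and, and_true]
      omega
    · intro s hs
      obtain ⟨p, q⟩ := s
      simp only [Finset.mem_filter, Finset.mem_product, Finset.mem_range] at hs
      simp only [Prod.ext_iff, true_and, and_true]
      omega
    · intro t ht
      obtain ⟨p, q⟩ := t
      simp only [Finset.mem_filter, Finset.mem_product, Finset.mem_range] at ht
      obtain ⟨⟨hp, hq⟩, hqa⟩ := ht
      dsimp only
      refine sgn_smul_congr ?_ ?_
      · rw [sum_insSeq_le (show q ≤ p by omega),
            sum_insSeq_gt (show q < p - a₂ + 1 by omega),
            show p - a₂ + 1 + a₂ - 1 = p by omega,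
            show ((p - a₂ + 1 : ℕ) : ℤ) = (p : ℤ) - (a₂ : ℤ) + 1 by omega]
        simp only [pairZ_add_right, pairZ_add_left]
        simp only [pairZ_comm n κ₂ κ₁]
        exact ⟨-(pairZ n κ₁ κ₂), by ring⟩
      · refine ml_congr h3m fun l hl => ?_
        simp only [insSeq, shiftSeq]
        split_ifs <;>
          first
          | rfl
          | (exfalso; omega)
          | (congr 1 <;> omega)
          | (refine ml_congr h2m fun m hm => ?_; (try simp only [insSeq, shiftSeq]); first | (split_ifs <;> (first | rfl | (exfalso; omega) | (congr 1 <;> omega) | (refine ml_congr h1m fun r hr => ?_; (try simp only [insSeq, shiftSeq]); first | (split_ifs <;> (first | rfl | (exfalso; omega) | (congr 1 <;> omega))) | rfl | (exfalso; omega) | (congr 1 <;> omega)))) | rfl | (exfalso; omega) | (congr 1 <;> omega) | (refine ml_congr h1m fun r hr => ?_; (try simp only [insSeq, shiftSeq]); first | (split_ifs <;> (first | rfl | (exfalso; omega) | (congr 1 <;> omega))) | rfl | (exfalso; omega) | (congr 1 <;> omega)))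
          | (refine ml_congr h1m fun m hm => ?_; (try simp only [insSeq, shiftSeq]); first | (split_ifs <;> (first | rfl | (exfalso; omega) | (congr 1 <;> omega) | (refine ml_congr h2m fun r hr => ?_; (try simp only [insSeq, shiftSeq]); first | (split_ifs <;> (first | rfl | (exfalso; omega) | (congr 1 <;> omega))) | rfl | (exfalso; omega) | (congr 1 <;> omega)))) | rfl | (exfalso; omega) | (congr 1 <;> omega) | (refine ml_congr h2m fun r hr => ?_; (try simp only [insSeq, shiftSeq]); first | (split_ifs <;> (first | rfl | (exfalso; omega) | (congr 1 <;> omega))) | rfl | (exfalso; omega) | (congr 1 <;> omega)))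

end NR
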